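/- The Jacobi matrix J^{MP} with entries α_n = (n+1)/(2 sin φ) on the off-diagonal and β_n = -(n + 1/2)/tan φ on the diagonal (the Meixner–Pollaczek matrix with λ = 1/2) commutes entrywise with the Hankel matrix H with H_{m,n} = cos((m+n)φ), for every φ ∈ (0,π), φ ≠ π/2. -/

import Mathlib

/-- Entry of `J * H` where `J` is the tridiagonal matrix with diagonal `β` and
off-diagonal `α` (`J_{k,k+1} = J_{k+1,k} = α k`). -/
noncomputable def jacobiMulR (α β : ℕ → ℝ) (H : ℕ → ℕ → ℝ) (m n : ℕ) : ℝ :=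
  (if m = 0 then 0 else α (m - 1) * H (m - 1) n) + β m * H m n + α m * H (m + 1) n

/-- Entry of `H * J`. -/
noncomputable def mulJacobiR (α β : ℕ → ℝ) (H : ℕ → ℕ → ℝ) (m n : ℕ) : ℝ :=
  (if n = 0 then 0 else H m (n - 1) * α (n - 1)) + H m n * β n + H m (n + 1) * α n
lemma keyJ (φ : ℝ) (hs : Real.sin φ ≠ 0) (m n : ℕ) :
    jacobiMulR (fun k => ((k : ℝ) + 1) / (2 * Real.sin φ))
      (fun k => -(((k : ℝ) + 1/2) / Real.tan φ))
      (fun i j => Real.cos (((i : ℝ) + (j : ℝ)) * φ)) m n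
      = -Real.sin (((m : ℝ) + (n : ℝ)) * φ) / 2 := by
  unfold jacobiMulR
  rcases m with _ | k
  · simp only [if_pos rfl, ↓reduceIte, Nat.cast_zero, Nat.cast_add, Nat.cast_one]
    have e1 : ((0:ℝ) + 1 + (n : ℝ)) * φ = ((0:ℝ) + (n:ℝ)) * φ + φ := by ring
    rw [e1, Real.cos_add, Real.tan_eq_sin_div_cos]
    field_simp
    ring
  · simp only [if_neg (Nat.succ_ne_zero k), Nat.add_sub_cancel, Nat.cast_add, Nat.cast_one]
    have e1 : ((k:ℝ) + 1 + (n : ℝ)) * φ = ((k:ℝ) + (n:ℝ)) * φ + φ := by ring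
    have e2 : ((k:ℝ) + 1 + 1 + (n : ℝ)) * φ = (((k:ℝ) + (n:ℝ)) * φ + φ) + φ := by ring
    rw [e1, e2]
    simp only [Real.cos_add, Real.sin_add, Real.tan_eq_sin_div_cos]
    field_simp
    linear_combination (-((k:ℝ)+1)*Real.cos (((k:ℝ)+(n:ℝ))*φ)) * Real.sin_sq_add_cos_sq φ

lemma keyM (φ : ℝ) (hs : Real.sin φ ≠ 0) (m n : ℕ) :
    mulJacobiR (fun k => ((k : ℝ) + 1) / (2 * Real.sin φ))
      (fun k => -(((k : ℝ) + 1/2) / Real.tan φ))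
      (fun i j => Real.cos (((i : ℝ) + (j : ℝ)) * φ)) m n
      = -Real.sin (((m : ℝ) + (n : ℝ)) * φ) / 2 := by
  have h : mulJacobiR (fun k => ((k : ℝ) + 1) / (2 * Real.sin φ))
      (fun k => -(((k : ℝ) + 1/2) / Real.tan φ))
      (fun i j => Real.cos (((i : ℝ) + (j : ℝ)) * φ)) m n
      = jacobiMulR (fun k => ((k : ℝ) + 1) / (2 * Real.sin φ))
      (fun k => -(((k : ℝ) + 1/2) / Real.tan φ))
      (fun i j => Real.cos (((i : ℝ) + (j : ℝ)) * φ)) n m := by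
    unfold mulJacobiR jacobiMulR
    have c1 : ∀ a b : ℕ, Real.cos (((a:ℝ) + (b:ℝ)) * φ) = Real.cos (((b:ℝ) + (a:ℝ)) * φ) := by
      intro a b; ring_nf
    beta_reduce
    rw [c1 m n, c1 m (n+1)]
    rcases n with _ | k
    · simp; ring
    · simp only [if_neg (Nat.succ_ne_zero k), Nat.add_sub_cancel]
      rw [c1 m k]
      ring
  rw [h, keyJ φ hs n m]
  ring_nf

/-- the Meixner–Pollaczek Jacobi matrix with `λ = 1/2`, i.e. off-diagonal
`α_n = (n+1)/(2 sin φ)` and diagonal `β_n = -(n+1/2)/tan φ`, commutes entrywise with the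
Hankel matrix `H_{m,n} = cos((m+n)φ)`, for every `φ ∈ (0,π)`, `φ ≠ π/2`. -/
theorem stmt9 (φ : ℝ) (hφ : φ ∈ Set.Ioo 0 Real.pi) (hφ' : φ ≠ Real.pi / 2) :
    ∀ m n : ℕ,
      jacobiMulR (fun k => ((k : ℝ) + 1) / (2 * Real.sin φ))
        (fun k => -(((k : ℝ) + 1/2) / Real.tan φ))
        (fun i j => Real.cos (((i : ℝ) + (j : ℝ)) * φ)) m n =
      mulJacobiR (fun k => ((k : ℝ) + 1) / (2 * Real.sin φ))
        (fun k => -(((k : ℝ) + 1/2) / Real.tan φ))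
        (fun i j => Real.cos (((i : ℝ) + (j : ℝ)) * φ)) m n := by
  intro m n
  have hs : Real.sin φ ≠ 0 :=
    ne_of_gt (Real.sin_pos_of_pos_of_lt_pi hφ.1 hφ.2)
  rw [keyJ φ hs m n, keyM φ hs m n]
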